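/- Let γ be a self-adjoint operator with γ² = I that anticommutes with a set S of operators, and suppose the unital *-algebra generated by S equals L(H_E) ⊕ L(H_O) for an orthogonal decomposition H = H_E ⊕ H_O (block-diagonal algebra) with γ mapping H_E to H_O and vice versa. Then the *-algebra generated by S ∪ {γ} is all of L(H). -/

import Mathlib

/-- Adding one Majorana to the even algebra generates the full operator algebra:
let `H` be a finite-dimensional complex Hilbert space with orthogonal decomposition
`H = H_E ⊕ H_O` (with `H_O = H_Eᗮ`), let `γ` be a self-adjoint operator with `γ² = I`
exchanging `H_E` and `H_O`, anticommuting with every element of a set `S` of operators,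
and suppose the unital *-algebra generated by `S` is exactly the block-diagonal algebra
`L(H_E) ⊕ L(H_O)` of operators preserving both summands. Then the *-algebra generated
by `S ∪ {γ}` is all of `L(H)`. -/
theorem majorana_generates_full_algebra
    {H : Type*} [NormedAddCommGroup H] [InnerProductSpace ℂ H] [FiniteDimensional ℂ H]
    (E : Submodule ℂ H) (S : Set (H →L[ℂ] H)) (γ : H →L[ℂ] H)
    (hγsa : star γ = γ) (hγsq : γ * γ = 1)
    (hγE : ∀ x ∈ E, γ x ∈ Eᗮ) (hγO : ∀ x ∈ Eᗮ, γ x ∈ E)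
    (hanti : ∀ T ∈ S, γ * T = -(T * γ))
    (hS : (StarAlgebra.adjoin ℂ S : Set (H →L[ℂ] H)) =
      {T : H →L[ℂ] H | (∀ x ∈ E, T x ∈ E) ∧ (∀ x ∈ Eᗮ, T x ∈ Eᗮ)}) :
    StarAlgebra.adjoin ℂ (S ∪ {γ}) = ⊤ := by
  set P : H →L[ℂ] H := E.subtypeL ∘L Submodule.orthogonalProjectionOnto E with hPdef
  set Q : H →L[ℂ] H := Eᗮ.subtypeL ∘L Submodule.orthogonalProjectionOnto Eᗮ with hQdef
  have hPQ : P + Q = 1 := by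
    ext x
    show (E.orthogonalProjectionOnto x : H) + (Eᗮ.orthogonalProjectionOnto x : H) = x
    exact (E.starProjection_add_starProjection_orthogonal x)
  have hPmem : ∀ x, P x ∈ E := fun x => (Submodule.orthogonalProjectionOnto E x).2
  have hQmem : ∀ x, Q x ∈ Eᗮ := fun x => (Submodule.orthogonalProjectionOnto Eᗮ x).2
  have hPO : ∀ x ∈ Eᗮ, P x = 0 := fun x hx => by
    simp [hPdef, Submodule.orthogonalProjectionOnto_apply_of_mem_orthogonal hx]
  have hQE : ∀ x ∈ E, Q x = 0 := fun x hx => by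
    simp [hQdef, Submodule.orthogonalProjectionOnto_apply_of_mem_orthogonal
      (E.le_orthogonal_orthogonal hx)]
  set A := StarAlgebra.adjoin ℂ (S ∪ {γ}) with hA
  have hγA : γ ∈ A := StarAlgebra.subset_adjoin ℂ _ (Or.inr rfl)
  have hBA : ∀ T : H →L[ℂ] H,
      ((∀ x ∈ E, T x ∈ E) ∧ (∀ x ∈ Eᗮ, T x ∈ Eᗮ)) → T ∈ A := by
    intro T hT
    have h1 : T ∈ (StarAlgebra.adjoin ℂ S : Set (H →L[ℂ] H)) := by
      rw [hS]; exact hT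
    exact StarAlgebra.adjoin_le
      (fun x hx => StarAlgebra.subset_adjoin ℂ _ (Set.mem_union_left _ hx)) h1
  rw [eq_top_iff]
  rintro T -
  set D := P * T * P + Q * T * Q with hDdef
  set O := P * T * Q + Q * T * P with hOdef
  have hdec : T = D + O := by
    have h0 : (P + Q) * T * (P + Q) = T := by rw [hPQ, one_mul, mul_one]
    calc T = (P + Q) * T * (P + Q) := h0.symm
    _ = D + O := by rw [hDdef, hOdef]; noncomm_ring
  have hD : D ∈ A := by
    refine hBA D ⟨fun x hx => ?_, fun x hx => ?_⟩
    · have : D x = P (T (P x)) + Q (T (Q x)) := by simp [hDdef, ContinuousLinearMap.mul_apply]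
      rw [this, hQE x hx]
      simpa using hPmem (T (P x))
    · have : D x = P (T (P x)) + Q (T (Q x)) := by simp [hDdef, ContinuousLinearMap.mul_apply]
      rw [this, hPO x hx]
      simpa using hQmem (T (Q x))
  have hOγ : O * γ ∈ A := by
    refine hBA (O * γ) ⟨fun x hx => ?_, fun x hx => ?_⟩
    · have h1 : (O * γ) x = P (T (Q (γ x))) + Q (T (P (γ x))) := by
        simp [hOdef, ContinuousLinearMap.mul_apply]
      rw [h1, hPO _ (hγE x hx)]
      simpa using hPmem (T (Q (γ x)))
    · have h1 : (O * γ) x = P (T (Q (γ x))) + Q (T (P (γ x))) := by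
        simp [hOdef, ContinuousLinearMap.mul_apply]
      rw [h1, hQE _ (hγO x hx)]
      simpa using hQmem (T (P (γ x)))
  have hO : O ∈ A := by
    have h1 : O = (O * γ) * γ := by rw [mul_assoc, hγsq, mul_one]
    rw [h1]; exact mul_mem hOγ hγA
  rw [hdec]; exact add_mem hD hO
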